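/- arXiv:2408.01689 — 2 statements merged into one kernel-verified Lean document; each statement's English description precedes it below -/
import Mathlib

section
/- Let η_t = max((ψ(θ_t) − ⟨∇f_2(θ_t), ∇f_1(θ_t)⟩)/‖∇f_1(θ_t)‖², 0) and assume 0 ≤ ψ(θ_t) ≤ α‖∇f_1(θ_t)‖^δ for some α ≥ 0 and δ ≥ 1, with ∇f_1(θ_t) ≠ 0. Then η_t ψ(θ_t) ≤ (α‖∇f_1(θ_t)‖^{δ−1} + ‖∇f_2(θ_t)‖) · α^{1/δ} · ψ(θ_t)^{1−1/δ}. -/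
open RealInnerProductSpace

theorem eta_psi_bound {d : ℕ}
    (v w : EuclideanSpace ℝ (Fin d)) (ψ α δ : ℝ)
    (hv : v ≠ 0) (hα : 0 ≤ α) (hδ : 1 ≤ δ)
    (hψ0 : 0 ≤ ψ) (hψ : ψ ≤ α * ‖v‖ ^ δ) :
    max ((ψ - ⟪w, v⟫) / ‖v‖ ^ 2) 0 * ψ ≤
      (α * ‖v‖ ^ (δ - 1) + ‖w‖) * α ^ ((1:ℝ) / δ) * ψ ^ (1 - 1 / δ) := by
  have hN : (0:ℝ) < ‖v‖ := norm_pos_iff.mpr hv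
  have hδ0 : δ ≠ 0 := by linarith
  rcases eq_or_lt_of_le hψ0 with h0 | hψpos
  · rw [← h0, mul_zero]
    have : (0:ℝ) ≤ (0:ℝ) ^ (1 - 1/δ) := Real.rpow_nonneg le_rfl _
    have h1 : (0:ℝ) ≤ α * ‖v‖ ^ (δ - 1) + ‖w‖ := by positivity
    have h2 : (0:ℝ) ≤ α ^ ((1:ℝ)/δ) := Real.rpow_nonneg hα _
    positivity
  · -- ψ > 0
    have hαpos : 0 < α := by
      by_contra h
      push_neg at h
      have : α * ‖v‖ ^ δ ≤ 0 := mul_nonpos_of_nonpos_of_nonneg h (Real.rpow_nonneg hN.le _)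
      linarith
    set N := ‖v‖
    -- key: ψ^{1/δ} ≤ α^{1/δ} * N
    have hkey : ψ ^ ((1:ℝ)/δ) ≤ α ^ ((1:ℝ)/δ) * N := by
      have h1 : ψ ^ ((1:ℝ)/δ) ≤ (α * N ^ δ) ^ ((1:ℝ)/δ) :=
        Real.rpow_le_rpow hψ0 hψ (by positivity)
      have h2 : (α * N ^ δ) ^ ((1:ℝ)/δ) = α ^ ((1:ℝ)/δ) * N := by
        rw [Real.mul_rpow hα (Real.rpow_nonneg hN.le _), ← Real.rpow_mul hN.le,
          show δ * (1/δ) = 1 by field_simp, Real.rpow_one]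
      linarith [h1, h2.le]
    -- A := ψ/N ≤ B := α^{1/δ} ψ^{1-1/δ}
    have hsplit : ψ = ψ ^ ((1:ℝ)/δ) * ψ ^ (1 - 1/δ) := by
      rw [← Real.rpow_add hψpos]; norm_num
    have hpow_nonneg : (0:ℝ) ≤ ψ ^ (1 - 1/δ) := Real.rpow_nonneg hψ0 _
    have hAB : ψ / N ≤ α ^ ((1:ℝ)/δ) * ψ ^ (1 - 1/δ) := by
      rw [div_le_iff₀ hN]
      calc ψ = ψ ^ ((1:ℝ)/δ) * ψ ^ (1 - 1/δ) := hsplit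
        _ ≤ (α ^ ((1:ℝ)/δ) * N) * ψ ^ (1 - 1/δ) := by
            apply mul_le_mul_of_nonneg_right hkey hpow_nonneg
        _ = α ^ ((1:ℝ)/δ) * ψ ^ (1 - 1/δ) * N := by ring
    -- A ≤ C := α N^{δ-1}
    have hAC : ψ / N ≤ α * N ^ (δ - 1) := by
      rw [div_le_iff₀ hN]
      calc ψ ≤ α * N ^ δ := hψ
        _ = α * N ^ (δ - 1) * N := by
            rw [mul_assoc, ← Real.rpow_add_one hN.ne' (δ - 1)]; ring_nf
    -- bound the max
    have hinner : |⟪w, v⟫| ≤ ‖w‖ * N := abs_real_inner_le_norm w v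
    have hmax : max ((ψ - ⟪w, v⟫) / N ^ 2) 0 ≤ (ψ + ‖w‖ * N) / N ^ 2 := by
      apply max_le
      · apply div_le_div_of_nonneg_right ?_ (by positivity) |>.trans_eq rfl
        · nlinarith [abs_le.mp hinner]
      · positivity
    have hN2 : (N:ℝ) ^ 2 = N * N := sq N
    have hLHS : max ((ψ - ⟪w, v⟫) / N ^ 2) 0 * ψ ≤ (ψ / N + ‖w‖) * (ψ / N) := by
      have := mul_le_mul_of_nonneg_right hmax hψ0
      calc max ((ψ - ⟪w, v⟫) / N ^ 2) 0 * ψ ≤ (ψ + ‖w‖ * N) / N ^ 2 * ψ := this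
        _ = (ψ / N + ‖w‖) * (ψ / N) := by field_simp
    have hA0 : 0 ≤ ψ / N := by positivity
    have hw0 : 0 ≤ ‖w‖ := norm_nonneg w
    calc max ((ψ - ⟪w, v⟫) / N ^ 2) 0 * ψ ≤ (ψ / N + ‖w‖) * (ψ / N) := hLHS
      _ ≤ (α * N ^ (δ - 1) + ‖w‖) * (α ^ ((1:ℝ)/δ) * ψ ^ (1 - 1/δ)) := by
          apply mul_le_mul (by linarith) hAB hA0 (by linarith)
      _ = (α * N ^ (δ - 1) + ‖w‖) * α ^ ((1:ℝ)/δ) * ψ ^ (1 - 1/δ) := by ring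
end

section
/- Combining the bounds ∫_0^t ψ(θ_s) ds ≤ A := f_1(θ_0) − f_1*, η_s ψ(θ_s) ≤ Υ ψ(θ_s)^{1−1/δ} for a constant Υ, and ∫_0^t ‖g_s‖² ds ≤ ∫_0^t η_s ψ(θ_s) ds + B with B := f_2(θ_0) − f_2*, one gets min_{s∈[0,t]} ‖g_s‖² ≤ Υ(A/t)^{1−1/δ} + B/t, hence min_{s∈[0,t]} ‖g_s‖ = O(1/t^{(δ−1)/(2δ)}). -/
open MeasureTheory

/-- Tangent-line bound for the concave function `x ↦ x ^ p` at `lam`. -/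
lemma rpow_tangent_le {x lam p : ℝ} (hx : 0 ≤ x) (hl : 0 < lam) (hp0 : 0 ≤ p) (hp1 : p ≤ 1) :
    x ^ p ≤ p * lam ^ (p - 1) * x + (1 - p) * lam ^ p := by
  have key := Real.geom_mean_le_arith_mean2_weighted (w₁ := p) (w₂ := 1 - p) (p₁ := x)
    (p₂ := lam) hp0 (by linarith) hx hl.le (by ring)
  have hl1 : (0:ℝ) < lam ^ (1 - p) := Real.rpow_pos_of_pos hl _
  rw [← mul_le_mul_iff_left₀ hl1]
  calc x ^ p * lam ^ (1 - p) ≤ p * x + (1 - p) * lam := key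
    _ = (p * lam ^ (p - 1) * x + (1 - p) * lam ^ p) * lam ^ (1 - p) := by
        have e1 : lam ^ (p - 1) * lam ^ (1 - p) = 1 := by
          rw [← Real.rpow_add hl]; norm_num
        have e2 : lam ^ p * lam ^ (1 - p) = lam := by
          rw [← Real.rpow_add hl]; norm_num
        calc p * x + (1 - p) * lam
            = p * x * (lam ^ (p - 1) * lam ^ (1 - p)) + (1 - p) * (lam ^ p * lam ^ (1 - p)) := by
              rw [e1, e2]; ring
          _ = (p * lam ^ (p - 1) * x + (1 - p) * lam ^ p) * lam ^ (1 - p) := by ring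

theorem phase1_g_rate {d : ℕ}
    (g : ℝ → EuclideanSpace ℝ (Fin d)) (ψ η : ℝ → ℝ) (A B Υ δ : ℝ)
    (hA : 0 ≤ A) (hB : 0 ≤ B) (hΥ : 0 ≤ Υ) (hδ : 1 ≤ δ)
    (hψ0 : ∀ s, 0 ≤ ψ s) (hη0 : ∀ s, 0 ≤ η s)
    (hψint : ∀ t, 0 ≤ t → MeasureTheory.IntegrableOn ψ (Set.Icc 0 t))
    (hgint : ∀ t, 0 ≤ t →
      MeasureTheory.IntegrableOn (fun s => ‖g s‖ ^ 2) (Set.Icc 0 t))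
    (hηψint : ∀ t, 0 ≤ t →
      MeasureTheory.IntegrableOn (fun s => η s * ψ s) (Set.Icc 0 t))
    (h1 : ∀ t, 0 ≤ t → ∫ s in (0:ℝ)..t, ψ s ≤ A)
    (h2 : ∀ s, η s * ψ s ≤ Υ * ψ s ^ (1 - 1/δ))
    (h3 : ∀ t, 0 ≤ t →
      ∫ s in (0:ℝ)..t, ‖g s‖ ^ 2 ≤ (∫ s in (0:ℝ)..t, η s * ψ s) + B) :
    ∀ t, 0 < t →
      sInf ((fun s => ‖g s‖ ^ 2) '' Set.Icc 0 t) ≤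
        Υ * (A / t) ^ (1 - 1/δ) + B / t := by
  intro t ht
  have hδ0 : (0:ℝ) < δ := by linarith
  set p : ℝ := 1 - 1/δ with hpdef
  have hp0 : 0 ≤ p := by
    have : 1/δ ≤ 1 := by rw [div_le_one hδ0]; exact hδ
    simp only [hpdef]; linarith
  have hp1 : p ≤ 1 := by
    have : 0 ≤ 1/δ := by positivity
    simp only [hpdef]; linarith
  set m := sInf ((fun s => ‖g s‖ ^ 2) '' Set.Icc 0 t) with hmdef
  have hne : ((fun s => ‖g s‖ ^ 2) '' Set.Icc 0 t).Nonempty :=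
    ⟨_, ⟨0, ⟨le_refl 0, ht.le⟩, rfl⟩⟩
  have hbdd : BddBelow ((fun s => ‖g s‖ ^ 2) '' Set.Icc 0 t) := by
    refine ⟨0, fun y hy => ?_⟩
    obtain ⟨s, _, rfl⟩ := hy
    positivity
  have hmle : ∀ s ∈ Set.Icc (0:ℝ) t, m ≤ ‖g s‖ ^ 2 := fun s hs => csInf_le hbdd ⟨s, hs, rfl⟩
  -- Step A : m * t ≤ ∫ ‖g‖²
  have hA1 : m * t ≤ ∫ s in (0:ℝ)..t, ‖g s‖ ^ 2 := by
    rw [intervalIntegral.integral_of_le ht.le]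
    have hc : m * t = ∫ _ in Set.Ioc (0:ℝ) t, m := by
      rw [setIntegral_const, measureReal_def, Real.volume_Ioc, ENNReal.toReal_ofReal (by linarith), smul_eq_mul,
        sub_zero, mul_comm]
    rw [hc]
    refine setIntegral_mono_on (integrableOn_const ?_)
      ((hgint t ht.le).mono_set Set.Ioc_subset_Icc_self) measurableSet_Ioc
      (fun s hs => hmle s (Set.Ioc_subset_Icc_self hs))
    rw [Real.volume_Ioc]; exact ENNReal.ofReal_ne_top
  -- Step B : ∫ ηψ ≤ Υ * (A/t)^p * t
  have hηψI : IntervalIntegrable (fun s => η s * ψ s) volume 0 t := by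
    apply MeasureTheory.IntegrableOn.intervalIntegrable
    rw [Set.uIcc_of_le ht.le]; exact hηψint t ht.le
  have hψI : IntervalIntegrable ψ volume 0 t := by
    apply MeasureTheory.IntegrableOn.intervalIntegrable
    rw [Set.uIcc_of_le ht.le]; exact hψint t ht.le
  have hB1 : ∫ s in (0:ℝ)..t, η s * ψ s ≤ Υ * (A / t) ^ p * t := by
    rcases eq_or_lt_of_le hp0 with hp | hp
    · -- p = 0 (δ = 1)
      have hpt : ∀ s, η s * ψ s ≤ Υ := by
        intro s
        have := h2 s
        rw [← hp, Real.rpow_zero, mul_one] at this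
        exact this
      calc ∫ s in (0:ℝ)..t, η s * ψ s ≤ ∫ _ in (0:ℝ)..t, Υ :=
            intervalIntegral.integral_mono_on ht.le hηψI intervalIntegrable_const
              (fun s _ => hpt s)
        _ = Υ * (A / t) ^ p * t := by
            rw [intervalIntegral.integral_const, ← hp, Real.rpow_zero, smul_eq_mul]; ring
    · rcases eq_or_lt_of_le hA with hA0 | hA0
      · -- A = 0 : ψ = 0 a.e.
        have hψ00 : ∫ s in Set.Ioc (0:ℝ) t, ψ s = 0 := by
          refine le_antisymm ?_ (setIntegral_nonneg measurableSet_Ioc fun s _ => hψ0 s)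
          rw [← intervalIntegral.integral_of_le ht.le]
          exact le_of_le_of_eq (h1 t ht.le) hA0.symm
        have hae : ψ =ᵐ[volume.restrict (Set.Ioc (0:ℝ) t)] 0 := by
          refine (integral_eq_zero_iff_of_nonneg ?_ ?_).1 hψ00
          · exact fun s => hψ0 s
          · exact (hψint t ht.le).mono_set Set.Ioc_subset_Icc_self
        have hz : ∫ s in (0:ℝ)..t, η s * ψ s = 0 := by
          rw [intervalIntegral.integral_of_le ht.le]
          refine integral_eq_zero_of_ae ?_
          filter_upwards [hae] with s hs
          simp [hs]
        rw [hz, ← hA0]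
        have : (0:ℝ) / t = 0 := by simp
        rw [this, Real.zero_rpow (ne_of_gt hp)]
        positivity
      · -- main case : A > 0
        set lam : ℝ := A / t with hlam
        have hl : 0 < lam := div_pos hA0 ht
        have hpt : ∀ s, η s * ψ s ≤
            Υ * (p * lam ^ (p - 1) * ψ s + (1 - p) * lam ^ p) := by
          intro s
          refine (h2 s).trans (mul_le_mul_of_nonneg_left ?_ hΥ)
          exact rpow_tangent_le (hψ0 s) hl hp0 hp1
        have hRI : IntervalIntegrable
            (fun s => Υ * (p * lam ^ (p - 1) * ψ s + (1 - p) * lam ^ p)) volume 0 t :=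
          (((hψI.const_mul _).add intervalIntegrable_const).const_mul Υ)
        have step : ∫ s in (0:ℝ)..t, η s * ψ s ≤
            ∫ s in (0:ℝ)..t, Υ * (p * lam ^ (p - 1) * ψ s + (1 - p) * lam ^ p) :=
          intervalIntegral.integral_mono_on ht.le hηψI hRI (fun s _ => hpt s)
        have calc2 : ∫ s in (0:ℝ)..t, Υ * (p * lam ^ (p - 1) * ψ s + (1 - p) * lam ^ p)
            = Υ * (p * lam ^ (p - 1) * ∫ s in (0:ℝ)..t, ψ s) + Υ * ((1 - p) * lam ^ p) * t := by
          rw [intervalIntegral.integral_const_mul,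
            intervalIntegral.integral_add (hψI.const_mul _) intervalIntegrable_const,
            intervalIntegral.integral_const_mul, intervalIntegral.integral_const,
            smul_eq_mul, sub_zero]
          ring
        have hcoef : 0 ≤ Υ * (p * lam ^ (p - 1)) := by
          have := (Real.rpow_pos_of_pos hl (p - 1)).le
          positivity
        have step2 : Υ * (p * lam ^ (p - 1) * ∫ s in (0:ℝ)..t, ψ s)
            ≤ Υ * (p * lam ^ (p - 1) * A) := by
          have hup := h1 t ht.le
          have := mul_le_mul_of_nonneg_left hup hcoef
          calc Υ * (p * lam ^ (p - 1) * ∫ s in (0:ℝ)..t, ψ s)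
              = Υ * (p * lam ^ (p - 1)) * ∫ s in (0:ℝ)..t, ψ s := by ring
            _ ≤ Υ * (p * lam ^ (p - 1)) * A := this
            _ = Υ * (p * lam ^ (p - 1) * A) := by ring
        have hAeq : A = lam * t := by
          rw [hlam]; field_simp
        have hfin : Υ * (p * lam ^ (p - 1) * A) + Υ * ((1 - p) * lam ^ p) * t
            = Υ * lam ^ p * t := by
          have e1 : lam ^ (p - 1) * lam = lam ^ p := by
            rw [← Real.rpow_add_one (ne_of_gt hl)]
            norm_num
          calc Υ * (p * lam ^ (p - 1) * A) + Υ * ((1 - p) * lam ^ p) * t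
              = Υ * (p * (lam ^ (p - 1) * lam) * t) + Υ * ((1 - p) * lam ^ p) * t := by
                rw [hAeq]; ring
            _ = Υ * lam ^ p * t := by rw [e1]; ring
        calc ∫ s in (0:ℝ)..t, η s * ψ s
            ≤ Υ * (p * lam ^ (p - 1) * ∫ s in (0:ℝ)..t, ψ s) + Υ * ((1 - p) * lam ^ p) * t := by
              rw [← calc2]; exact step
          _ ≤ Υ * (p * lam ^ (p - 1) * A) + Υ * ((1 - p) * lam ^ p) * t := by linarith
          _ = Υ * (A / t) ^ p * t := by rw [hfin]
  -- combine
  have hfinal : m * t ≤ Υ * (A / t) ^ p * t + B := by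
    have := h3 t ht.le
    linarith
  have : m ≤ (Υ * (A / t) ^ p * t + B) / t := (le_div_iff₀ ht).2 (by linarith)
  calc m ≤ (Υ * (A / t) ^ p * t + B) / t := this
    _ = Υ * (A / t) ^ p + B / t := by
        rw [add_div, mul_div_cancel_right₀ _ (ne_of_gt ht)]
end
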